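/- arXiv:1801.08675 — 2 statements merged into one kernel-verified Lean document; each statement's English description precedes it below -/
import Mathlib

section
/- Let f : ℝ → ℝ be a Schwartz function (smooth with all derivatives rapidly decreasing), let α be a natural number, and let a be a real parameter. Then sup_{x ∈ ℝ} (1+x^2)^α |f(x+a) - f(x) - f'(x)·a - f''(x)·a^2/2| = O(a^3) as a → 0. -/
/-- Taylor remainder bound for Schwartz functions, uniform in `x`, is `O(a^3)` as `a → 0`. -/
theorem schwartz_taylor_remainder_bigO (f : SchwartzMap ℝ ℝ) (α : ℕ) :
    ∃ C δ : ℝ, 0 < C ∧ 0 < δ ∧ ∀ a : ℝ, |a| ≤ δ → ∀ x : ℝ,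
      (1 + x^2)^α *
        |f (x + a) - f x - deriv (⇑f) x * a - iteratedDeriv 2 (⇑f) x * a^2 / 2|
        ≤ C * |a|^3 := by
  have hsmooth : ContDiff ℝ ((⊤:ℕ∞) : WithTop ℕ∞) ⇑f := f.smooth ⊤
  have hdiff : ∀ {g : ℝ → ℝ}, ContDiff ℝ ((⊤:ℕ∞) : WithTop ℕ∞) g → Differentiable ℝ g := fun h =>
    h.differentiable (by simp)
  set g1 := deriv (⇑f) with hg1def
  set g2 := iteratedDeriv 2 (⇑f) with hg2def
  set g3 := iteratedDeriv 3 (⇑f) with hg3def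
  have hiter : ∀ n : ℕ, ContDiff ℝ ((⊤:ℕ∞) : WithTop ℕ∞) (iteratedDeriv n (⇑f)) := by
    intro n
    rw [iteratedDeriv_eq_iterate]
    exact hsmooth.iterate_deriv n
  have hg1smooth : ContDiff ℝ ((⊤:ℕ∞) : WithTop ℕ∞) g1 := by
    have := hiter 1
    rwa [iteratedDeriv_one] at this
  have hg2smooth : ContDiff ℝ ((⊤:ℕ∞) : WithTop ℕ∞) g2 := hiter 2
  have hd1 : ∀ y : ℝ, HasDerivAt (⇑f) (g1 y) y := fun y =>
    (hdiff hsmooth y).hasDerivAt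
  have hd2 : ∀ y : ℝ, HasDerivAt g1 (g2 y) y := by
    intro y
    have h : g2 y = deriv g1 y := by
      rw [hg2def, hg1def, iteratedDeriv_succ, iteratedDeriv_one]
    rw [h]
    exact (hdiff hg1smooth y).hasDerivAt
  have hd3 : ∀ y : ℝ, HasDerivAt g2 (g3 y) y := by
    intro y
    have h : g3 y = deriv g2 y := by rw [hg3def, hg2def, iteratedDeriv_succ]
    rw [h]
    exact (hdiff hg2smooth y).hasDerivAt
  -- global decay bound on g3 with weight
  obtain ⟨D, hD0, hD⟩ : ∃ D : ℝ, 0 ≤ D ∧ ∀ y : ℝ, (1 + y ^ 2) ^ α * |g3 y| ≤ D := by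
    refine ⟨2 ^ (2 * α) * (Finset.Iic (2 * α, 3)).sup
      (fun m => SchwartzMap.seminorm ℝ m.1 m.2) f, by positivity, fun y => ?_⟩
    have h1 := SchwartzMap.one_add_le_sup_seminorm_apply (𝕜 := ℝ) (m := (2 * α, 3))
      (k := 2 * α) (n := 3) le_rfl le_rfl f y
    rw [norm_iteratedFDeriv_eq_norm_iteratedDeriv] at h1
    refine le_trans ?_ h1
    rw [Real.norm_eq_abs]
    refine mul_le_mul_of_nonneg_right ?_ (abs_nonneg _)
    calc (1 + y ^ 2) ^ α ≤ ((1 + ‖y‖) ^ 2) ^ α := by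
          refine pow_le_pow_left₀ (by positivity) ?_ α
          have h2 : ‖y‖ ^ 2 = y ^ 2 := by rw [Real.norm_eq_abs, sq_abs]
          nlinarith [norm_nonneg y]
      _ = (1 + ‖y‖) ^ (2 * α) := by rw [← pow_mul]
  refine ⟨3 ^ α * D + 1, 1, by positivity, one_pos, fun a ha x => ?_⟩
  set w : ℝ := (1 + x ^ 2) ^ α with hw
  have hw0 : 0 < w := by positivity
  -- bound on g3 near x
  have hB : ∀ t : ℝ, |t| ≤ 1 → |g3 (x + t)| ≤ 3 ^ α * D / w := by
    intro t ht
    rw [le_div_iff₀ hw0]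
    have ht2 : t ^ 2 ≤ 1 := by
      rw [← sq_abs]
      nlinarith [abs_nonneg t]
    have hbase : (1 + x ^ 2) ≤ 3 * (1 + (x + t) ^ 2) := by
      nlinarith [sq_nonneg (x + 2 * t)]
    have key : w ≤ 3 ^ α * (1 + (x + t) ^ 2) ^ α := by
      rw [hw, ← mul_pow]
      exact pow_le_pow_left₀ (by positivity) hbase α
    calc |g3 (x + t)| * w ≤ |g3 (x + t)| * (3 ^ α * (1 + (x + t) ^ 2) ^ α) :=
          mul_le_mul_of_nonneg_left key (abs_nonneg _)
      _ = 3 ^ α * ((1 + (x + t) ^ 2) ^ α * |g3 (x + t)|) := by ring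
      _ ≤ 3 ^ α * D := by
          refine mul_le_mul_of_nonneg_left (hD _) (by positivity)
  set s : Set ℝ := Metric.closedBall (0 : ℝ) |a| with hs
  have hconv : Convex ℝ s := convex_closedBall _ _
  have hmem : ∀ t : ℝ, |t| ≤ |a| → t ∈ s := by
    intro t ht
    simp only [hs, Metric.mem_closedBall, Real.dist_eq, sub_zero]
    exact ht
  have habs : ∀ t : ℝ, t ∈ s → |t| ≤ |a| := by
    intro t ht
    simpa [hs, Metric.mem_closedBall, Real.dist_eq] using ht
  have h0s : (0 : ℝ) ∈ s := hmem 0 (by simp)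
  have has : a ∈ s := hmem a le_rfl
  set B : ℝ := 3 ^ α * D / w with hBdef
  have hB0 : 0 ≤ B := by positivity
  -- Claim 1
  have claim1 : ∀ t ∈ s, |g2 (x + t) - g2 x| ≤ B * |a| := by
    intro t hts
    have h := Convex.norm_image_sub_le_of_norm_hasDerivWithin_le
      (f := fun u => g2 (x + u)) (f' := fun u => g3 (x + u)) (s := s) (C := B)
      (fun u _ => ((hd3 (x + u)).comp_const_add x u).hasDerivWithinAt)
      (fun u hu => by
        rw [Real.norm_eq_abs]
        exact hB u ((habs u hu).trans ha))
      hconv h0s hts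
    have h' : |g2 (x + t) - g2 x| ≤ B * |t| := by
      simpa [Real.norm_eq_abs] using h
    exact h'.trans (mul_le_mul_of_nonneg_left (habs t hts) hB0)
  -- Claim 2
  have claim2 : ∀ t ∈ s, |g1 (x + t) - g1 x - g2 x * t| ≤ B * |a| * |a| := by
    intro t hts
    have h := Convex.norm_image_sub_le_of_norm_hasDerivWithin_le
      (f := fun u => g1 (x + u) - g2 x * u) (f' := fun u => g2 (x + u) - g2 x)
      (s := s) (C := B * |a|)
      (fun u _ => by
        have hA : HasDerivAt (fun v : ℝ => g1 (x + v)) (g2 (x + u)) u :=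
          (hd2 (x + u)).comp_const_add x u
        have hM : HasDerivAt (fun v : ℝ => g2 x * v) (g2 x) u := by
          simpa using (hasDerivAt_id u).const_mul (g2 x)
        exact (hA.sub hM).hasDerivWithinAt)
      (fun u hu => by rw [Real.norm_eq_abs]; exact claim1 u hu)
      hconv h0s hts
    have h2 : |g1 (x + t) - g2 x * t - (g1 (x + 0) - g2 x * 0)| ≤ B * |a| * |t - 0| := by
      simpa [Real.norm_eq_abs] using h
    simp only [add_zero, mul_zero, sub_zero] at h2
    calc |g1 (x + t) - g1 x - g2 x * t| = |g1 (x + t) - g2 x * t - g1 x| := by ring_nf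
      _ ≤ B * |a| * |t| := h2
      _ ≤ B * |a| * |a| := mul_le_mul_of_nonneg_left (habs t hts) (by positivity)
  -- Claim 3
  have claim3 : |f (x + a) - f x - g1 x * a - g2 x * a ^ 2 / 2| ≤ B * |a| * |a| * |a| := by
    have h := Convex.norm_image_sub_le_of_norm_hasDerivWithin_le
      (f := fun u => f (x + u) - g1 x * u - g2 x * u ^ 2 / 2)
      (f' := fun u => g1 (x + u) - g1 x - g2 x * u)
      (s := s) (C := B * |a| * |a|)
      (fun u _ => by
        have h1 : HasDerivAt (fun u : ℝ => f (x + u)) (g1 (x + u)) u :=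
          (hd1 (x + u)).comp_const_add x u
        have h2 : HasDerivAt (fun u : ℝ => g1 x * u) (g1 x) u := by
          simpa using (hasDerivAt_id u).const_mul (g1 x)
        have h3 : HasDerivAt (fun u : ℝ => g2 x * u ^ 2 / 2) (g2 x * u) u := by
          have := ((hasDerivAt_pow 2 u).const_mul (g2 x)).div_const 2
          refine this.congr_deriv ?_
          ring
        exact ((h1.sub h2).sub h3).hasDerivWithinAt)
      (fun u hu => by rw [Real.norm_eq_abs]; exact claim2 u hu)
      hconv h0s has
    have h2 : |f (x + a) - g1 x * a - g2 x * a ^ 2 / 2 -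
        (f (x + 0) - g1 x * 0 - g2 x * 0 ^ 2 / 2)| ≤ B * |a| * |a| * |a - 0| := by
      simpa [Real.norm_eq_abs] using h
    simp only [add_zero, mul_zero, sub_zero, ne_eq, OfNat.ofNat_ne_zero,
      not_false_eq_true, zero_pow, zero_div] at h2
    calc |f (x + a) - f x - g1 x * a - g2 x * a ^ 2 / 2|
        = |f (x + a) - g1 x * a - g2 x * a ^ 2 / 2 - f x| := by ring_nf
      _ ≤ B * |a| * |a| * |a| := by simpa using h2
  -- conclude
  calc w * |f (x + a) - f x - g1 x * a - g2 x * a ^ 2 / 2|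
      ≤ w * (B * |a| * |a| * |a|) := mul_le_mul_of_nonneg_left claim3 (le_of_lt hw0)
    _ = w * B * |a| ^ 3 := by ring
    _ = 3 ^ α * D * |a| ^ 3 := by
        rw [hBdef, mul_div_cancel₀ _ hw0.ne']
    _ ≤ (3 ^ α * D + 1) * |a| ^ 3 := by
        have h3 : (0:ℝ) ≤ |a| ^ 3 := by positivity
        nlinarith
end

section
/- For fixed z ∈ ℝ, as θ → 0 the function P_θ(σ) = (1/√θ)(Φ(z/σ + σ√θ/2) e^{√θ z} − Φ(z/σ − σ√θ/2)) converges pointwise for each σ > 0 to P_0(σ) = zΦ(z/σ) + σφ(z/σ), and P_0 is strictly increasing in σ on (0,∞). -/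
open Real Set Filter Topology

noncomputable def stdNormalPdf (x : ℝ) : ℝ := (Real.sqrt (2 * π))⁻¹ * Real.exp (-x^2 / 2)
noncomputable def stdNormalCdf (x : ℝ) : ℝ := ∫ t in Iic x, stdNormalPdf t

lemma pdf_cont : Continuous stdNormalPdf := by
  unfold stdNormalPdf; fun_prop

lemma pdf_pos (x : ℝ) : 0 < stdNormalPdf x := by
  unfold stdNormalPdf
  have : (0:ℝ) < Real.sqrt (2 * π) := Real.sqrt_pos.2 (by positivity)
  positivity

lemma pdf_integrable : MeasureTheory.Integrable stdNormalPdf := by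
  have h : stdNormalPdf = fun x => (Real.sqrt (2*π))⁻¹ * Real.exp (-(1/2 : ℝ) * x^2) := by
    funext x; unfold stdNormalPdf; ring_nf
  rw [h]
  exact (integrable_exp_neg_mul_sq (by norm_num)).const_mul _

lemma cdf_hasDerivAt (x : ℝ) : HasDerivAt stdNormalCdf (stdNormalPdf x) x := by
  have h : ∀ y : ℝ, stdNormalCdf y = stdNormalCdf 0 + ∫ t in (0:ℝ)..y, stdNormalPdf t := by
    intro y
    unfold stdNormalCdf
    rw [← intervalIntegral.integral_Iic_sub_Iic pdf_integrable.integrableOn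
      pdf_integrable.integrableOn]
    ring
  have h2 : HasDerivAt (fun u => ∫ t in (0:ℝ)..u, stdNormalPdf t) (stdNormalPdf x) x :=
    intervalIntegral.integral_hasDerivAt_right
    pdf_integrable.intervalIntegrable
    (pdf_cont.stronglyMeasurableAtFilter _ _) pdf_cont.continuousAt
  have h3 : HasDerivAt (fun y => stdNormalCdf 0 + ∫ t in (0:ℝ)..y, stdNormalPdf t)
      (stdNormalPdf x) x := h2.const_add _
  exact h3.congr_of_eventuallyEq (Filter.Eventually.of_forall h)

lemma pdf_hasDerivAt (x : ℝ) : HasDerivAt stdNormalPdf (-x * stdNormalPdf x) x := by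
  have h1 : HasDerivAt (fun y : ℝ => -y^2/2) (-x) x := by
    have : HasDerivAt (_ : ℝ → ℝ) _ x := ((hasDerivAt_pow 2 x).neg.div_const 2)
    refine this.congr_deriv ?_; ring
  have h2 : HasDerivAt (_ : ℝ → ℝ) _ x := (h1.exp).const_mul ((Real.sqrt (2*π))⁻¹)
  have he : stdNormalPdf = fun y => (Real.sqrt (2*π))⁻¹ * Real.exp (-y^2/2) := rfl
  rw [he]
  convert h2 using 1
  simp [stdNormalPdf]
  ring


/-- Normalized Black–Scholes put price with log-moneyness `√θ z` and volatility `σ`. -/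
noncomputable def bsPut (z θ σ : ℝ) : ℝ :=
  (1 / Real.sqrt θ) *
    (stdNormalCdf (z / σ + σ * Real.sqrt θ / 2) * Real.exp (Real.sqrt θ * z)
      - stdNormalCdf (z / σ - σ * Real.sqrt θ / 2))

/-- The Bachelier-type limit `P₀`. -/
noncomputable def bsPutLimit (z σ : ℝ) : ℝ :=
  z * stdNormalCdf (z / σ) + σ * stdNormalPdf (z / σ)

lemma ratio_hasDerivAt (z : ℝ) {σ : ℝ} (hσ : 0 < σ) :
    HasDerivAt (fun s : ℝ => z / s) (-z / σ^2) σ := by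
  have h : HasDerivAt (_ : ℝ → ℝ) _ σ := (hasDerivAt_inv hσ.ne').const_mul z
  simp only [div_eq_mul_inv]
  convert h using 1
  field_simp

lemma limit_hasDerivAt (z : ℝ) {σ : ℝ} (hσ : 0 < σ) :
    HasDerivAt (fun s => bsPutLimit z s) (stdNormalPdf (z / σ)) σ := by
  have hr := ratio_hasDerivAt z hσ
  have h1 : HasDerivAt (fun s : ℝ => stdNormalCdf (z / s))
      (stdNormalPdf (z / σ) * (-z / σ^2)) σ := (cdf_hasDerivAt (z / σ)).comp σ hr
  have h2 : HasDerivAt (fun s : ℝ => stdNormalPdf (z / s))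
      (-(z / σ) * stdNormalPdf (z / σ) * (-z / σ^2)) σ := (pdf_hasDerivAt (z / σ)).comp σ hr
  have h3 : HasDerivAt (_ : ℝ → ℝ) _ σ := ((h1.const_mul z).add ((hasDerivAt_id' σ).mul h2))
  unfold bsPutLimit
  refine h3.congr_deriv ?_
  field_simp
  ring

theorem bsPut_tendsto_and_limit_strictMono (z : ℝ) :
    (∀ σ : ℝ, 0 < σ →
      Tendsto (fun θ => bsPut z θ σ) (𝓝[>] 0) (𝓝 (bsPutLimit z σ))) ∧
    StrictMonoOn (fun σ => bsPutLimit z σ) (Ioi (0 : ℝ)) := by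
  constructor
  · intro σ hσ
    set G : ℝ → ℝ := fun s =>
      stdNormalCdf (z / σ + σ * s / 2) * Real.exp (s * z) - stdNormalCdf (z / σ - σ * s / 2)
      with hGdef
    have hd1 : HasDerivAt (fun s : ℝ => z / σ + σ * s / 2) (σ / 2) 0 := by
      simpa using ((((hasDerivAt_id (0:ℝ)).const_mul σ).div_const 2).const_add (z / σ))
    have hd2 : HasDerivAt (fun s : ℝ => z / σ - σ * s / 2) (-(σ / 2)) 0 := by
      simpa using (((((hasDerivAt_id (0:ℝ)).const_mul σ).div_const 2)).const_sub (z / σ))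
    have hc1 : HasDerivAt (fun s : ℝ => stdNormalCdf (z / σ + σ * s / 2))
        (stdNormalPdf (z / σ) * (σ / 2)) 0 := by
      have : HasDerivAt (_ : ℝ → ℝ) _ 0 := (cdf_hasDerivAt (z / σ + σ * 0 / 2)).comp 0 hd1
      simpa [Function.comp_def] using this
    have hc2 : HasDerivAt (fun s : ℝ => stdNormalCdf (z / σ - σ * s / 2))
        (stdNormalPdf (z / σ) * -(σ / 2)) 0 := by
      have : HasDerivAt (_ : ℝ → ℝ) _ 0 := (cdf_hasDerivAt (z / σ - σ * 0 / 2)).comp 0 hd2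
      simpa [Function.comp_def] using this
    have hexp : HasDerivAt (fun s : ℝ => Real.exp (s * z)) z 0 := by
      have := ((hasDerivAt_id (0:ℝ)).mul_const z).exp
      simpa using this
    have hG : HasDerivAt G (bsPutLimit z σ) 0 := by
      have : HasDerivAt (_ : ℝ → ℝ) _ 0 := (hc1.mul hexp).sub hc2
      refine this.congr_deriv ?_
      simp [bsPutLimit]
      ring
    have hG0 : G 0 = 0 := by simp [hGdef]
    have hslope := hG.tendsto_slope_zero_right
    have hsqrt : Tendsto Real.sqrt (𝓝[>] (0:ℝ)) (𝓝[>] (0:ℝ)) := by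
      rw [tendsto_nhdsWithin_iff]
      constructor
      · simpa using (Real.continuous_sqrt.tendsto 0).mono_left nhdsWithin_le_nhds
      · filter_upwards [self_mem_nhdsWithin] with θ hθ
        exact Real.sqrt_pos.2 hθ
    have hcomp := hslope.comp hsqrt
    refine hcomp.congr fun θ => ?_
    simp only [Function.comp, hG0, zero_add, smul_eq_mul, hGdef, bsPut, one_div, mul_zero,
      zero_div, add_zero, zero_mul, Real.exp_zero, mul_one, sub_self, sub_zero]
  · refine strictMonoOn_of_deriv_pos (convex_Ioi 0) ?_ ?_
    · exact fun x hx => (limit_hasDerivAt z hx).continuousAt.continuousWithinAt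
    · intro x hx
      rw [interior_Ioi] at hx
      rw [(limit_hasDerivAt z hx).deriv]
      exact pdf_pos _
end
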